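/- For every α > 0, every u_ℓ, u_r > 0 and every v_ℓ, v_r ∈ ℝ, there exists a unique pair of real numbers (ε₁, ε₂) such that ε₂ − ε₁ = (1/2)·ln(u_ℓ/u_r) and h(ε₁) + h(ε₂) = (v_r − v_ℓ)/(2α). (These ε₁, ε₂ are the strengths of the 1-wave and 2-wave in the unique solution of the Riemann problem for the isothermal p-system ∂_t u − ∂_y v = 0, ∂_t v + ∂_y(α²/u) = 0.) -/

import Mathlib

/-- The function `h` used to parametrize rarefaction (`ε ≥ 0`) and shock (`ε < 0`)
branches of the wave curves of the isothermal p-system. -/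
noncomputable def waveH (ε : ℝ) : ℝ := if 0 ≤ ε then ε else Real.sinh ε

lemma waveH_strictMono : StrictMono waveH := by
  intro a b hab
  unfold waveH
  by_cases ha : 0 ≤ a
  · rw [if_pos ha, if_pos (ha.trans hab.le)]; exact hab
  · rw [if_neg ha]
    push_neg at ha
    by_cases hb : 0 ≤ b
    · rw [if_pos hb]
      calc Real.sinh a < Real.sinh 0 := Real.sinh_lt_sinh.2 ha
        _ = 0 := Real.sinh_zero
        _ ≤ b := hb
    · rw [if_neg hb]; exact Real.sinh_lt_sinh.2 hab

lemma waveH_continuous : Continuous waveH := by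
  unfold waveH
  apply Continuous.if_le continuous_id Real.continuous_sinh continuous_const continuous_id
  intro x hx
  simp only [id_eq] at hx
  rw [← hx, Real.sinh_zero]; rfl

lemma waveH_atTop : Filter.Tendsto waveH Filter.atTop Filter.atTop := by
  apply Filter.tendsto_atTop_mono' _ _ Filter.tendsto_id
  filter_upwards [Filter.eventually_ge_atTop (0:ℝ)] with x hx
  simp [waveH, hx]

lemma waveH_atBot : Filter.Tendsto waveH Filter.atBot Filter.atBot := by
  apply Filter.tendsto_atBot_mono' _ _ Filter.tendsto_id
  filter_upwards [Filter.eventually_le_atBot (0:ℝ)] with x hx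
  rcases eq_or_lt_of_le hx with h | h
  · simp [waveH, ← h]
  · rw [waveH, if_neg (not_le.2 h)]
    exact Real.sinh_le_self_iff.2 hx

/-- For every `α > 0`, `u_ℓ, u_r > 0` and `v_ℓ, v_r ∈ ℝ`, there is a
unique pair `(ε₁, ε₂)` with `ε₂ - ε₁ = (1/2)·log(u_ℓ/u_r)` and
`h(ε₁) + h(ε₂) = (v_r - v_ℓ)/(2α)` (the wave strengths of the Riemann solution). -/
theorem riemann_problem_unique_strengths
    (α uℓ ur : ℝ) (hα : 0 < α) (huℓ : 0 < uℓ) (hur : 0 < ur) (vℓ vr : ℝ) :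
    ∃! ε : ℝ × ℝ,
      ε.2 - ε.1 = (1/2) * Real.log (uℓ / ur) ∧
      waveH ε.1 + waveH ε.2 = (vr - vℓ) / (2 * α) := by
  set d : ℝ := (1/2) * Real.log (uℓ / ur) with hd
  set c : ℝ := (vr - vℓ) / (2 * α) with hc
  set g : ℝ → ℝ := fun t => waveH t + waveH (t + d) with hg
  have hmono : StrictMono g :=
    waveH_strictMono.add (waveH_strictMono.comp fun a b h => by simpa using h)
  have hcont : Continuous g :=
    waveH_continuous.add (waveH_continuous.comp (continuous_id.add continuous_const))
  have hTop : Filter.Tendsto g Filter.atTop Filter.atTop :=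
    Filter.Tendsto.atTop_add_atTop waveH_atTop
      (waveH_atTop.comp (Filter.tendsto_atTop_add_const_right _ d Filter.tendsto_id))
  have hBot : Filter.Tendsto g Filter.atBot Filter.atBot :=
    Filter.Tendsto.atBot_add_atBot waveH_atBot
      (waveH_atBot.comp (Filter.tendsto_atBot_add_const_right _ d Filter.tendsto_id))
  obtain ⟨t, ht⟩ := hcont.surjective hTop hBot c
  refine ⟨(t, t + d), ⟨by ring, ht⟩, ?_⟩
  rintro ⟨a, b⟩ ⟨h1, h2⟩
  simp only at h1 h2 ⊢
  have hb : b = a + d := by linarith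
  have : g a = c := by rw [hg]; dsimp; rw [← hb]; exact h2
  have ha : a = t := hmono.injective (this.trans ht.symm)
  simp [ha, hb]
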